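/- With p_{AB} as above, the Euclidean norm of p_{AB} equals √(abc(a+b)/(ab+ac+bc)). -/

import Mathlib

open Finset
open scoped Classical

variable {X : Type*} [Fintype X] [DecidableEq X]

/-- Split pseudometric: coordinate at pair s is 1 if s meets both U and V, else 0. -/
noncomputable def splitDelta (U V : Finset X) : EuclideanSpace ℝ (Sym2 X) :=
  WithLp.toLp 2 (fun s => if (∃ i ∈ s, i ∈ U) ∧ (∃ j ∈ s, j ∈ V) then 1 else 0)

set_option linter.unusedSectionVars false in
lemma not_meet {U V W : Finset X} (hUV : Disjoint U V) (hUW : Disjoint U W)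
    (hVW : Disjoint V W) (s : Sym2 X)
    (hU : ∃ i ∈ s, i ∈ U) (hV : ∃ j ∈ s, j ∈ V) : ¬ ∃ k ∈ s, k ∈ W := by
  induction s using Sym2.ind with
  | _ x y =>
    rintro ⟨k, hk, hkW⟩
    obtain ⟨i, hi, hiU⟩ := hU
    obtain ⟨j, hj, hjV⟩ := hV
    simp only [Sym2.mem_iff] at hi hj hk
    rcases hi with rfl | rfl <;> rcases hj with rfl | rfl <;> rcases hk with rfl | rfl <;>
      first
        | exact (Finset.disjoint_left.mp hUV hiU) hjV
        | exact (Finset.disjoint_left.mp hUW hiU) hkW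
        | exact (Finset.disjoint_left.mp hVW hjV) hkW

lemma splitDelta_sq (U V : Finset X) (s : Sym2 X) :
    splitDelta U V s * splitDelta U V s = splitDelta U V s := by
  simp only [splitDelta]
  by_cases h : (∃ i ∈ s, i ∈ U) ∧ (∃ j ∈ s, j ∈ V) <;> simp [h]

lemma card_split (U V : Finset X) (h : Disjoint U V) :
    (univ.filter (fun s : Sym2 X => (∃ i ∈ s, i ∈ U) ∧ (∃ j ∈ s, j ∈ V))).card
      = U.card * V.card := by
  have himg : (univ.filter (fun s : Sym2 X => (∃ i ∈ s, i ∈ U) ∧ (∃ j ∈ s, j ∈ V)))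
      = (U ×ˢ V).image (fun p => s(p.1, p.2)) := by
    ext s
    simp only [mem_filter, mem_univ, true_and, mem_image, mem_product, Prod.exists]
    constructor
    · intro hs
      induction s using Sym2.ind with
      | _ x y =>
        obtain ⟨⟨i, hi, hiU⟩, ⟨j, hj, hjV⟩⟩ := hs
        simp only [Sym2.mem_iff] at hi hj
        rcases hi with rfl | rfl <;> rcases hj with rfl | rfl
        · exact absurd hjV (Finset.disjoint_left.mp h hiU)
        · exact ⟨i, j, ⟨hiU, hjV⟩, rfl⟩
        · exact ⟨i, j, ⟨hiU, hjV⟩, Sym2.eq_swap⟩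
        · exact absurd hjV (Finset.disjoint_left.mp h hiU)
    · rintro ⟨x, y, ⟨hx, hy⟩, rfl⟩
      exact ⟨⟨x, by simp, hx⟩, ⟨y, by simp, hy⟩⟩
  rw [himg, Finset.card_image_of_injOn, Finset.card_product]
  rintro ⟨x, y⟩ hxy ⟨x', y'⟩ hxy' he
  simp only [mem_coe, mem_product] at hxy hxy'
  simp only [Sym2.eq, Sym2.rel_iff', Prod.mk.injEq, Prod.swap_prod_mk] at he
  rcases he with ⟨rfl, rfl⟩ | ⟨h1e, h2e⟩
  · rfl
  · exact absurd (h1e ▸ hxy'.2) (Finset.disjoint_left.mp h hxy.1)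

lemma sum_split (U V : Finset X) (h : Disjoint U V) :
    ∑ s : Sym2 X, splitDelta U V s = (U.card : ℝ) * V.card := by
  simp only [splitDelta]
  rw [Finset.sum_boole, card_split U V h]
  push_cast
  ring

/-- ‖p_{AB}‖ = √(abc(a+b)/(ab+ac+bc)). -/
theorem norm_pAB (A B C : Finset X)
    (hA : A.Nonempty) (hB : B.Nonempty) (hC : C.Nonempty)
    (hAB : Disjoint A B) (hAC : Disjoint A C) (hBC : Disjoint B C) :
    let a : ℝ := A.card; let b : ℝ := B.card; let c : ℝ := C.card
    let pAB : EuclideanSpace ℝ (Sym2 X) :=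
      (-(a * c + b * c) / (a * b + a * c + b * c)) • splitDelta A B +
        (a * b / (a * b + a * c + b * c)) • (splitDelta A C + splitDelta B C)
    ‖pAB‖ = Real.sqrt (a * b * c * (a + b) / (a * b + a * c + b * c)) := by
  intro a b c pAB
  have ha : 0 < a := by show (0 : ℝ) < (A.card : ℝ); exact_mod_cast hA.card_pos
  have hb : 0 < b := by show (0 : ℝ) < (B.card : ℝ); exact_mod_cast hB.card_pos
  have hc : 0 < c := by show (0 : ℝ) < (C.card : ℝ); exact_mod_cast hC.card_pos
  have hD : 0 < a * b + a * c + b * c := by positivity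
  set α : ℝ := -(a * c + b * c) / (a * b + a * c + b * c) with hα
  set β : ℝ := a * b / (a * b + a * c + b * c) with hβ
  have hpt : ∀ s : Sym2 X, pAB s ^ 2 =
      α ^ 2 * splitDelta A B s + β ^ 2 * splitDelta A C s + β ^ 2 * splitDelta B C s := by
    intro s
    have hps : pAB s = α * splitDelta A B s + β * (splitDelta A C s + splitDelta B C s) := by
      simp only [pAB, PiLp.add_apply, PiLp.smul_apply, smul_eq_mul]
      try rw [hα, hβ]
      try ring
    have m1 : splitDelta A B s * splitDelta A C s = 0 := by
      simp only [splitDelta]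
      rcases em ((∃ i ∈ s, i ∈ A) ∧ (∃ j ∈ s, j ∈ B)) with hP | hP
      · rcases em ((∃ i ∈ s, i ∈ A) ∧ (∃ j ∈ s, j ∈ C)) with hQ | hQ
        · exact absurd hQ.2 (not_meet hAB hAC hBC s hP.1 hP.2)
        · simp [hQ]
      · simp [hP]
    have m2 : splitDelta A B s * splitDelta B C s = 0 := by
      simp only [splitDelta]
      rcases em ((∃ i ∈ s, i ∈ A) ∧ (∃ j ∈ s, j ∈ B)) with hP | hP
      · rcases em ((∃ i ∈ s, i ∈ B) ∧ (∃ j ∈ s, j ∈ C)) with hQ | hQ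
        · exact absurd hQ.2 (not_meet hAB hAC hBC s hP.1 hP.2)
        · simp [hQ]
      · simp [hP]
    have m3 : splitDelta A C s * splitDelta B C s = 0 := by
      simp only [splitDelta]
      rcases em ((∃ i ∈ s, i ∈ A) ∧ (∃ j ∈ s, j ∈ C)) with hP | hP
      · rcases em ((∃ i ∈ s, i ∈ B) ∧ (∃ j ∈ s, j ∈ C)) with hQ | hQ
        · exact absurd hQ.1 (not_meet hAC hAB hBC.symm s hP.1 hP.2)
        · simp [hQ]
      · simp [hP]
    rw [hps]
    linear_combination α ^ 2 * splitDelta_sq A B s + β ^ 2 * splitDelta_sq A C s +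
      β ^ 2 * splitDelta_sq B C s + 2 * α * β * m1 + 2 * α * β * m2 + 2 * β ^ 2 * m3
  have hsum : ∑ s : Sym2 X, pAB s ^ 2 =
      a * b * c * (a + b) / (a * b + a * c + b * c) := by
    rw [Finset.sum_congr rfl (fun s _ => hpt s)]
    rw [Finset.sum_add_distrib, Finset.sum_add_distrib, ← Finset.mul_sum, ← Finset.mul_sum,
      ← Finset.mul_sum, sum_split A B hAB, sum_split A C hAC, sum_split B C hBC]
    rw [hα, hβ]
    show (-(a * c + b * c) / (a * b + a * c + b * c)) ^ 2 * (a * b) +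
        (a * b / (a * b + a * c + b * c)) ^ 2 * (a * c) +
        (a * b / (a * b + a * c + b * c)) ^ 2 * (b * c) = _
    field_simp
    ring
  rw [EuclideanSpace.norm_eq]
  rw [show ∑ s : Sym2 X, ‖pAB s‖ ^ 2 = ∑ s : Sym2 X, pAB s ^ 2 from
    Finset.sum_congr rfl fun s _ => by rw [Real.norm_eq_abs, sq_abs]]
  rw [hsum]
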